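/- Let v_0, ..., v_{11} ∈ ℤ^{12} be the cyclic shifts of v_0 = (2, −1, 0, 1, −1, 0, 0, 0, −1, 1, 0, −1), i.e., (v_s)_t = (v_0)_{t−s mod 12}. Then: (i) the rank of the 12×12 matrix with rows v_0, ..., v_{11} equals 6; (ii) v_k + v_{k+4} + v_{k+8} = 0 for k = 0, 1, 2, 3; (iii) v_{k+3} = v_k + v_{k+1} + v_{k+5} + v_{k+6} for k = 0, 1; and (iv) v_0, ..., v_5 are linearly independent over ℚ. -/

import Mathlib

/-- The vector `v₀ = (2, −1, 0, 1, −1, 0, 0, 0, −1, 1, 0, −1)` of singularity orders of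
`ξ₁₁(z)` in type `E₆`. -/
def v0E6 : Fin 12 → ℚ := ![2, -1, 0, 1, -1, 0, 0, 0, -1, 1, 0, -1]

/-- The cyclic shifts `(v_s)_t = (v₀)_{t-s mod 12}`. -/
def vE6 : Fin 12 → Fin 12 → ℚ := fun s t => v0E6 (t - s)

section aux

@[simp] lemma vA0 : v0E6 0 = 2 := rfl
@[simp] lemma vA1 : v0E6 1 = -1 := rfl
@[simp] lemma vA2 : v0E6 2 = 0 := rfl
@[simp] lemma vA3 : v0E6 3 = 1 := rfl
@[simp] lemma vA4 : v0E6 4 = -1 := rfl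
@[simp] lemma vA5 : v0E6 5 = 0 := rfl
@[simp] lemma vA6 : v0E6 6 = 0 := rfl
@[simp] lemma vA7 : v0E6 7 = 0 := rfl
@[simp] lemma vA8 : v0E6 8 = -1 := rfl
@[simp] lemma vA9 : v0E6 9 = 1 := rfl
@[simp] lemma vA10 : v0E6 10 = 0 := rfl
@[simp] lemma vA11 : v0E6 11 = -1 := rfl
@[simp] lemma vB1 : v0E6 (-1) = -1 := rfl
@[simp] lemma vB2 : v0E6 (-2) = 0 := rfl
@[simp] lemma vB3 : v0E6 (-3) = 1 := rfl
@[simp] lemma vB4 : v0E6 (-4) = -1 := rfl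
@[simp] lemma vB5 : v0E6 (-5) = 0 := rfl
@[simp] lemma vB6 : v0E6 (-6) = 0 := rfl
@[simp] lemma vB7 : v0E6 (-7) = 0 := rfl
@[simp] lemma vB8 : v0E6 (-8) = -1 := rfl
@[simp] lemma vB9 : v0E6 (-9) = 1 := rfl
@[simp] lemma vB10 : v0E6 (-10) = 0 := rfl
@[simp] lemma vB11 : v0E6 (-11) = -1 := rfl
@[simp] lemma cast0 (h : (6:ℕ) ≤ 12) : Fin.castLE h 0 = (0 : Fin 12) := rfl
@[simp] lemma cast1 (h : (6:ℕ) ≤ 12) : Fin.castLE h 1 = (1 : Fin 12) := rfl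
@[simp] lemma cast2 (h : (6:ℕ) ≤ 12) : Fin.castLE h 2 = (2 : Fin 12) := rfl
@[simp] lemma cast3 (h : (6:ℕ) ≤ 12) : Fin.castLE h 3 = (3 : Fin 12) := rfl
@[simp] lemma cast4 (h : (6:ℕ) ≤ 12) : Fin.castLE h 4 = (4 : Fin 12) := rfl
@[simp] lemma cast5 (h : (6:ℕ) ≤ 12) : Fin.castLE h 5 = (5 : Fin 12) := rfl

lemma vE6_comb6 : vE6 6 = -vE6 0 - vE6 1 + vE6 3 - vE6 5 := by
  funext t; fin_cases t <;> simp [vE6] <;> norm_num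

lemma vE6_comb7 : vE6 7 = vE6 0 - vE6 2 - vE6 3 + vE6 4 + vE6 5 := by
  funext t; fin_cases t <;> simp [vE6] <;> norm_num

lemma vE6_comb8 : vE6 8 = -vE6 0 - vE6 4 := by
  funext t; fin_cases t <;> simp [vE6] <;> norm_num

lemma vE6_comb9 : vE6 9 = -vE6 1 - vE6 5 := by
  funext t; fin_cases t <;> simp [vE6] <;> norm_num

lemma vE6_comb10 : vE6 10 = vE6 0 + vE6 1 - vE6 2 - vE6 3 + vE6 5 := by
  funext t; fin_cases t <;> simp [vE6] <;> norm_num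

lemma vE6_comb11 : vE6 11 = -vE6 0 + vE6 2 - vE6 4 - vE6 5 := by
  funext t; fin_cases t <;> simp [vE6] <;> norm_num

lemma vE6_LI : LinearIndependent ℚ (fun i : Fin 6 => vE6 (Fin.castLE (by norm_num) i)) := by
  rw [Fintype.linearIndependent_iff]
  intro g hg
  have h : ∀ t : Fin 12, (∑ i : Fin 6, g i • vE6 (Fin.castLE (by norm_num) i)) t = 0 :=
    fun t => by rw [hg]; rfl
  have h0 := h 0; have h1 := h 1; have h2 := h 2; have h3 := h 3
  have h4 := h 4; have h5 := h 5; have h6 := h 6; have h7 := h 7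
  simp [Fin.sum_univ_six, vE6] at h0 h1 h2 h3 h4 h5 h6 h7
  intro i; fin_cases i <;> simp <;> linarith

end aux

theorem E6_block_linear_algebra :
    (Matrix.of vE6).rank = 6 ∧
    (∀ k : Fin 12, k.1 ≤ 3 → vE6 k + vE6 (k + 4) + vE6 (k + 8) = 0) ∧
    (∀ k : Fin 12, k.1 ≤ 1 →
      vE6 (k + 3) = vE6 k + vE6 (k + 1) + vE6 (k + 5) + vE6 (k + 6)) ∧
    LinearIndependent ℚ (fun i : Fin 6 => vE6 (Fin.castLE (by norm_num) i)) := by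
  refine ⟨?_, ?_, ?_, vE6_LI⟩
  · set w : Fin 6 → (Fin 12 → ℚ) := fun i => vE6 (Fin.castLE (by norm_num) i) with hw
    have hspan : Submodule.span ℚ (Set.range (Matrix.of vE6)) =
        Submodule.span ℚ (Set.range w) := by
      apply le_antisymm
      · rw [Submodule.span_le]
        rintro _ ⟨s, rfl⟩
        set S := Submodule.span ℚ (Set.range w) with hS
        have m0 : vE6 0 ∈ S := Submodule.subset_span ⟨0, rfl⟩
        have m1 : vE6 1 ∈ S := Submodule.subset_span ⟨1, rfl⟩
        have m2 : vE6 2 ∈ S := Submodule.subset_span ⟨2, rfl⟩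
        have m3 : vE6 3 ∈ S := Submodule.subset_span ⟨3, rfl⟩
        have m4 : vE6 4 ∈ S := Submodule.subset_span ⟨4, rfl⟩
        have m5 : vE6 5 ∈ S := Submodule.subset_span ⟨5, rfl⟩
        have : Matrix.of vE6 s = vE6 s := rfl
        rw [this]
        fin_cases s
        · exact m0
        · exact m1
        · exact m2
        · exact m3
        · exact m4
        · exact m5
        · show vE6 6 ∈ (S : Set (Fin 12 → ℚ))
          rw [vE6_comb6]
          exact S.sub_mem (S.add_mem (S.sub_mem (S.neg_mem m0) m1) m3) m5
        · show vE6 7 ∈ (S : Set (Fin 12 → ℚ))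
          rw [vE6_comb7]
          exact S.add_mem (S.add_mem (S.sub_mem (S.sub_mem m0 m2) m3) m4) m5
        · show vE6 8 ∈ (S : Set (Fin 12 → ℚ))
          rw [vE6_comb8]
          exact S.sub_mem (S.neg_mem m0) m4
        · show vE6 9 ∈ (S : Set (Fin 12 → ℚ))
          rw [vE6_comb9]
          exact S.sub_mem (S.neg_mem m1) m5
        · show vE6 10 ∈ (S : Set (Fin 12 → ℚ))
          rw [vE6_comb10]
          exact S.add_mem (S.sub_mem (S.sub_mem (S.add_mem m0 m1) m2) m3) m5
        · show vE6 11 ∈ (S : Set (Fin 12 → ℚ))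
          rw [vE6_comb11]
          exact S.sub_mem (S.sub_mem (S.add_mem (S.neg_mem m0) m2) m4) m5
      · rw [Submodule.span_le]
        rintro _ ⟨i, rfl⟩
        exact Submodule.subset_span ⟨Fin.castLE (by norm_num) i, rfl⟩
    rw [Matrix.rank_eq_finrank_span_row, (show Submodule.span ℚ (Set.range (Matrix.of vE6).row) = _ from hspan), finrank_span_eq_card vE6_LI]
    simp
  · intro k hk
    fin_cases k <;> simp_all <;> (funext t; fin_cases t <;> simp [vE6] <;> norm_num)
  · intro k hk
    fin_cases k <;> simp_all <;> (funext t; fin_cases t <;> simp [vE6] <;> norm_num)
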